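/- Let f ∈ Fq[X] be a monic polynomial of degree n such that gcd(n,q) = 1 and such that f(X) = g(X^t) for some polynomial g ∈ Fq[X] and some integer t > 1. Then for every a ∈ Fq with a ≠ 0, there do not exist an integer m > 1 and a polynomial h ∈ Fq[X] such that f(X + a) = h(X^m). -/
import Mathlib


open Polynomial

/-- Let `f ∈ F_q[X]` be monic of degree `n` with `gcd(n,q) = 1` and
`f(X) = g(X^t)` for some `g ∈ F_q[X]` and some `t > 1`. Then for every `a ∈ F_q`, `a ≠ 0`,
there are no `m > 1` and `h ∈ F_q[X]` with `f(X + a) = h(X^m)`. -/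
theorem stmt15 {F : Type*} [Field F] [Fintype F]
    (f : F[X]) (n : ℕ) (hmonic : f.Monic) (hdeg : f.natDegree = n)
    (hgcd : Nat.gcd n (Fintype.card F) = 1)
    (t : ℕ) (ht : 1 < t) (g : F[X]) (hcomp : f = g.comp (X ^ t))
    (a : F) (ha : a ≠ 0) :
    ¬ ∃ m : ℕ, 1 < m ∧ ∃ h : F[X], f.comp (X + C a) = h.comp (X ^ m) := by
  rintro ⟨m, hm, h, hfh⟩
  have hq2 : 2 ≤ Fintype.card F := Fintype.one_lt_card
  have hn : n ≠ 0 := by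
    rintro rfl
    simp only [Nat.gcd_zero_left] at hgcd
    omega
  -- (n : F) ≠ 0
  obtain ⟨p, hp⟩ := CharP.exists F
  obtain ⟨k, hprime, hcard⟩ := FiniteField.card F p
  have hnF : (n : F) ≠ 0 := by
    rw [Ne, CharP.cast_eq_zero_iff F p]
    intro hd
    have hpq : p ∣ Fintype.card F := hcard ▸ dvd_pow_self p k.ne_zero
    have : p ∣ 1 := hgcd ▸ Nat.dvd_gcd hd hpq
    exact absurd (Nat.dvd_one.mp this) hprime.one_lt.ne'
  -- t ∣ n
  have htn : t ∣ n := by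
    refine ⟨g.natDegree, ?_⟩
    rw [← hdeg, hcomp, natDegree_comp, natDegree_X_pow, mul_comm]
  -- f.coeff (n-1) = 0
  have hco : f.coeff (n - 1) = 0 := by
    have : f = expand F t g := by rw [hcomp, expand_eq_comp_X_pow]
    rw [this, coeff_expand (by omega)]
    rw [if_neg]
    intro hd
    have h1 : t ∣ 1 := by
      have := Nat.dvd_sub htn hd
      rwa [Nat.sub_sub_self (Nat.one_le_iff_ne_zero.mpr hn)] at this
    exact absurd (Nat.dvd_one.mp h1) (by omega)
  have hcn : f.coeff n = 1 := by
    rw [← hdeg]; exact hmonic.coeff_natDegree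
  -- hasseDeriv (n-1) f = C n * X
  have hhd : hasseDeriv (n - 1) f = C (n : F) * X := by
    ext j
    rw [hasseDeriv_coeff]
    rcases j with _ | _ | j
    · simp [hco]
    · have h1 : 1 + (n - 1) = n := by omega
      have h2 : n.choose (n - 1) = n := by
        rw [Nat.choose_symm (Nat.one_le_iff_ne_zero.mpr hn), Nat.choose_one_right]
      simp [h1, h2, hcn]
    · have : f.coeff (j + 2 + (n - 1)) = 0 := by
        apply coeff_eq_zero_of_natDegree_lt
        omega
      simp [this, coeff_X, coeff_C]
  -- key coefficient
  have hkey : (f.comp (X + C a)).coeff (n - 1) = n * a := by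
    rw [← taylor_apply, taylor_coeff, hhd]
    simp
  have hkey' : (f.comp (X + C a)).coeff (n - 1) ≠ 0 := by
    rw [hkey]; exact mul_ne_zero hnF ha
  have hkeyn : (f.comp (X + C a)).coeff n ≠ 0 := by
    have hmon : (f.comp (X + C a)).Monic := hmonic.comp_X_add_C a
    have hdeg' : (f.comp (X + C a)).natDegree = n := by
      rw [natDegree_comp, natDegree_X_add_C, mul_one, hdeg]
    rw [← hdeg']
    simp [hmon.coeff_natDegree]
  -- rewrite via expand
  have hexp : f.comp (X + C a) = expand F m h := by
    rw [hfh, expand_eq_comp_X_pow]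
  have hm1 : m ∣ n - 1 := by
    by_contra hd
    rw [hexp, coeff_expand (by omega), if_neg hd] at hkey'
    exact hkey' rfl
  have hm2 : m ∣ n := by
    by_contra hd
    rw [hexp, coeff_expand (by omega), if_neg hd] at hkeyn
    exact hkeyn rfl
  have : m ∣ 1 := by
    have := Nat.dvd_sub hm2 hm1
    rwa [Nat.sub_sub_self (Nat.one_le_iff_ne_zero.mpr hn)] at this
  exact absurd (Nat.dvd_one.mp this) (by omega)
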